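/- For every u ∈ ℂ^{n+1} one has u*·(W·p₁)·u ≥ 0 (positive semidefiniteness), where W := blockdiag(G⁻¹, 1, 1) and p₁ := [[μs·I_{n−1} + (μ(λ+μ)/((λ+3μ)s))·ξ♯ξᵀ, −(2iμ²/(λ+3μ))·ξ♯, 0], [(2iμ²/(λ+3μ))·ξᵀ, (2μ(λ+2μ)/(λ+3μ))·s, 0], [0, 0, αs]]. -/

import Mathlib

noncomputable section

open Matrix

open scoped ComplexOrder

/-- Block matrix `[[T, col, 0], [row, d, 0], [0, 0, e]]` of size `(n+1) × (n+1)`,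
with blocks of sizes `n-1, 1, 1`. -/
def blk (n : ℕ) (T : Fin (n-1) → Fin (n-1) → ℂ) (colv rowv : Fin (n-1) → ℂ)
    (d e : ℂ) : Matrix (Fin (n+1)) (Fin (n+1)) ℂ :=
  Matrix.of fun i j =>
    if hi : (i : ℕ) < n - 1 then
      if hj : (j : ℕ) < n - 1 then T ⟨i, hi⟩ ⟨j, hj⟩
      else if (j : ℕ) = n - 1 then colv ⟨i, hi⟩ else 0
    else if (i : ℕ) = n - 1 then
      if hj : (j : ℕ) < n - 1 then rowv ⟨j, hj⟩
      else if (j : ℕ) = n - 1 then d else 0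
    else if (j : ℕ) = n then e else 0

/-- The matrix `F₁ = [[(1/s)ξ♯ξᵀ, i ξ♯, 0], [i ξᵀ, −s, 0], [0, 0, 0]]`. -/
def F1mat (n : ℕ) (ξ ξs : Fin (n-1) → ℝ) (s : ℝ) :
    Matrix (Fin (n+1)) (Fin (n+1)) ℂ :=
  blk n (fun a b => ((1 / s * ξs a * ξ b : ℝ) : ℂ))
    (fun a => Complex.I * ((ξs a : ℝ) : ℂ))
    (fun b => Complex.I * ((ξ b : ℝ) : ℂ))
    ((-s : ℝ) : ℂ) 0

/-- The matrix `F₂ = [[(1/s)ξ♯ξᵀ, −i((λ+2μ)/μ) ξ♯, 0], [−i(μ/(λ+2μ)) ξᵀ, −s, 0], [0, 0, 0]]`. -/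
def F2mat (n : ℕ) (ξ ξs : Fin (n-1) → ℝ) (s lam mu : ℝ) :
    Matrix (Fin (n+1)) (Fin (n+1)) ℂ :=
  blk n (fun a b => ((1 / s * ξs a * ξ b : ℝ) : ℂ))
    (fun a => -(Complex.I * (((lam + 2*mu)/mu * ξs a : ℝ) : ℂ)))
    (fun b => -(Complex.I * ((mu/(lam + 2*mu) * ξ b : ℝ) : ℂ)))
    ((-s : ℝ) : ℂ) 0

/-- `b₁ = i(λ+μ)·[[0, (1/μ) ξ♯, 0], [(1/(λ+2μ)) ξᵀ, 0, 0], [0, 0, 0]]`. -/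
def b1mat (n : ℕ) (ξ ξs : Fin (n-1) → ℝ) (lam mu : ℝ) :
    Matrix (Fin (n+1)) (Fin (n+1)) ℂ :=
  (Complex.I * ((lam + mu : ℝ) : ℂ)) •
    blk n (fun _ _ => 0)
      (fun a => ((1/mu * ξs a : ℝ) : ℂ))
      (fun b => ((1/(lam + 2*mu) * ξ b : ℝ) : ℂ)) 0 0

/-- `c₂ = −[[s²·I + ((λ+μ)/μ) ξ♯ξᵀ, 0, 0], [0, (μ/(λ+2μ)) s², 0], [0, 0, s²]]`. -/
def c2mat (n : ℕ) (ξ ξs : Fin (n-1) → ℝ) (s lam mu : ℝ) :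
    Matrix (Fin (n+1)) (Fin (n+1)) ℂ :=
  -(blk n
      (fun a b => ((s^2 * (if a = b then 1 else 0) + (lam + mu)/mu * ξs a * ξ b : ℝ) : ℂ))
      (fun _ => 0) (fun _ => 0)
      ((mu/(lam + 2*mu) * s^2 : ℝ) : ℂ) ((s^2 : ℝ) : ℂ))

/-- The principal symbol `p₁` of the thermoelastic Dirichlet-to-Neumann map. -/
def p1mat (n : ℕ) (ξ ξs : Fin (n-1) → ℝ) (s lam mu al : ℝ) :
    Matrix (Fin (n+1)) (Fin (n+1)) ℂ :=
  blk n
    (fun a b => ((mu * s * (if a = b then 1 else 0)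
        + mu * (lam + mu)/((lam + 3*mu) * s) * ξs a * ξ b : ℝ) : ℂ))
    (fun a => -(Complex.I * ((2 * mu^2/(lam + 3*mu) * ξs a : ℝ) : ℂ)))
    (fun b => Complex.I * ((2 * mu^2/(lam + 3*mu) * ξ b : ℝ) : ℂ))
    ((2 * mu * (lam + 2*mu)/(lam + 3*mu) * s : ℝ) : ℂ)
    ((al * s : ℝ) : ℂ)

/-- `A = blockdiag(μ·I, λ+2μ, α)`. -/
def Amat (n : ℕ) (lam mu al : ℝ) : Matrix (Fin (n+1)) (Fin (n+1)) ℂ :=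
  blk n (fun a b => if a = b then ((mu : ℝ) : ℂ) else 0)
    (fun _ => 0) (fun _ => 0) ((lam + 2*mu : ℝ) : ℂ) ((al : ℝ) : ℂ)

/-- `d₁ = [[0, iμ ξ♯, 0], [iλ ξᵀ, 0, 0], [0, 0, 0]]`. -/
def d1mat (n : ℕ) (ξ ξs : Fin (n-1) → ℝ) (lam mu : ℝ) :
    Matrix (Fin (n+1)) (Fin (n+1)) ℂ :=
  blk n (fun _ _ => 0)
    (fun a => Complex.I * ((mu * ξs a : ℝ) : ℂ))
    (fun b => Complex.I * ((lam * ξ b : ℝ) : ℂ)) 0 0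

/-- `W = blockdiag(G⁻¹, 1, 1)`. -/
def Wmat (n : ℕ) (G : Matrix (Fin (n-1)) (Fin (n-1)) ℝ) :
    Matrix (Fin (n+1)) (Fin (n+1)) ℂ :=
  blk n (fun a b => ((G⁻¹ a b : ℝ) : ℂ)) (fun _ => 0) (fun _ => 0) 1 1

namespace Aux

variable {n : ℕ}

def emb (n : ℕ) (a : Fin (n-1)) : Fin (n+1) := ⟨a.1, by have := a.2; omega⟩
def iN1 (n : ℕ) : Fin (n+1) := ⟨n-1, by omega⟩
def iN2 (n : ℕ) : Fin (n+1) := ⟨n, by omega⟩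

lemma sum_split {M : Type*} [AddCommMonoid M] (hn : 1 ≤ n) (f : Fin (n+1) → M) :
    ∑ i, f i = (∑ a : Fin (n-1), f (emb n a)) + f (iN1 n) + f (iN2 n) := by
  have h : n - 1 + 1 + 1 = n + 1 := by omega
  have e1 := (Equiv.sum_comp (finCongr h) f).symm
  rw [Fin.sum_univ_castSucc (fun j : Fin (n-1+1+1) => f (finCongr h j))] at e1
  rw [Fin.sum_univ_castSucc
      (fun j : Fin (n-1+1) => f (finCongr h j.castSucc))] at e1
  have h2 : f (finCongr h (Fin.last (n-1+1))) = f (iN2 n) := by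
    congr 1; ext; simp only [iN2, finCongr_apply, Fin.coe_cast, Fin.val_last]; omega
  rw [h2] at e1
  exact e1

end Aux

namespace Aux2
open Aux

variable {n : ℕ} {T : Fin (n-1) → Fin (n-1) → ℂ} {c r : Fin (n-1) → ℂ} {d e : ℂ}

lemma blk_aa (a b : Fin (n-1)) : blk n T c r d e (emb n a) (emb n b) = T a b := by
  simp only [blk, of_apply, emb, dif_pos a.2, dif_pos b.2]

lemma blk_a1 (a : Fin (n-1)) : blk n T c r d e (emb n a) (iN1 n) = c a := by
  simp only [blk, of_apply, emb, iN1, dif_pos a.2, dif_neg (lt_irrefl (n-1)), if_pos rfl, if_true]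

lemma blk_a2 (hn : 1 ≤ n) (a : Fin (n-1)) : blk n T c r d e (emb n a) (iN2 n) = 0 := by
  simp only [blk, of_apply, emb, iN2, dif_pos a.2]
  rw [dif_neg (by omega), if_neg (by omega)]

lemma blk_1a (a : Fin (n-1)) : blk n T c r d e (iN1 n) (emb n a) = r a := by
  simp only [blk, of_apply, emb, iN1, dif_neg (lt_irrefl (n-1)), if_pos rfl, if_true,
    dif_pos a.2]

lemma blk_11 : blk n T c r d e (iN1 n) (iN1 n) = d := by
  simp only [blk, of_apply, iN1, dif_neg (lt_irrefl (n-1)), if_pos rfl, if_true]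

lemma blk_12 (hn : 1 ≤ n) : blk n T c r d e (iN1 n) (iN2 n) = 0 := by
  simp only [blk, of_apply, iN1, iN2, dif_neg (lt_irrefl (n-1)), if_pos rfl, if_true]
  rw [dif_neg (show ¬ (n < n - 1) by omega), if_neg (show ¬ (n = n - 1) by omega)]

lemma blk_2a (hn : 1 ≤ n) (a : Fin (n-1)) : blk n T c r d e (iN2 n) (emb n a) = 0 := by
  simp only [blk, of_apply, emb, iN2]
  rw [dif_neg (by omega), if_neg (by omega), if_neg (by have := a.2; omega)]

lemma blk_21 (hn : 1 ≤ n) : blk n T c r d e (iN2 n) (iN1 n) = 0 := by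
  simp only [blk, of_apply, iN1, iN2]
  rw [dif_neg (by omega), if_neg (by omega), if_neg (by omega)]

lemma blk_22 (hn : 1 ≤ n) : blk n T c r d e (iN2 n) (iN2 n) = e := by
  simp only [blk, of_apply, iN2]
  rw [dif_neg (show ¬ (n < n - 1) by omega), if_neg (show ¬ (n = n - 1) by omega)]
  simp

end Aux2

namespace Aux3
open Aux Aux2

variable {n : ℕ}

lemma blk_mul (hn : 1 ≤ n) (T₁ T₂ : Fin (n-1) → Fin (n-1) → ℂ)
    (c₂ r₂ : Fin (n-1) → ℂ) (d₁ d₂ e₁ e₂ : ℂ) :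
    blk n T₁ (fun _ => 0) (fun _ => 0) d₁ e₁ * blk n T₂ c₂ r₂ d₂ e₂ =
    blk n (fun a b => ∑ k, T₁ a k * T₂ k b) (fun a => ∑ k, T₁ a k * c₂ k)
      (fun b => d₁ * r₂ b) (d₁ * d₂) (e₁ * e₂) := by
  ext i j
  rw [Matrix.mul_apply]
  have hi3 : (i:ℕ) < n-1 ∨ i = iN1 n ∨ i = iN2 n := by
    have := i.2
    by_cases h : (i:ℕ) < n-1
    · exact Or.inl h
    · rcases Nat.lt_or_ge (i:ℕ) n with h2 | h2
      · exact Or.inr (Or.inl (by ext; simp [iN1]; omega))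
      · exact Or.inr (Or.inr (by ext; simp [iN2]; omega))
  have hj3 : (j:ℕ) < n-1 ∨ j = iN1 n ∨ j = iN2 n := by
    have := j.2
    by_cases h : (j:ℕ) < n-1
    · exact Or.inl h
    · rcases Nat.lt_or_ge (j:ℕ) n with h2 | h2
      · exact Or.inr (Or.inl (by ext; simp [iN1]; omega))
      · exact Or.inr (Or.inr (by ext; simp [iN2]; omega))
  rcases hi3 with hi | hi | hi
  · have hie : i = emb n ⟨i, hi⟩ := by ext; rfl
    rcases hj3 with hj | hj | hj
    · have hje : j = emb n ⟨j, hj⟩ := by ext; rfl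
      rw [hie, hje, sum_split hn, blk_aa]
      simp only [blk_aa, blk_a1, blk_a2 hn, blk_1a, blk_2a hn, zero_mul, mul_zero,
        add_zero]
    · rw [hie, hj, sum_split hn, blk_a1]
      simp only [blk_aa, blk_a1, blk_a2 hn, blk_11, blk_21 hn, zero_mul, mul_zero, add_zero]
    · rw [hie, hj, sum_split hn, blk_a2 hn]
      simp only [blk_aa, blk_a1, blk_a2 hn, blk_12 hn, blk_22 hn, zero_mul, mul_zero,
        add_zero, Finset.sum_const_zero, zero_add]
  · rcases hj3 with hj | hj | hj
    · have hje : j = emb n ⟨j, hj⟩ := by ext; rfl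
      rw [hi, hje, sum_split hn, blk_1a]
      simp only [blk_aa, blk_1a, blk_11, blk_12 hn, blk_2a hn, zero_mul, mul_zero,
        add_zero, Finset.sum_const_zero, zero_add]
    · rw [hi, hj, sum_split hn, blk_11]
      simp only [blk_1a, blk_a1, blk_11, blk_12 hn, blk_21 hn, zero_mul, mul_zero,
        add_zero, Finset.sum_const_zero, zero_add]
    · rw [hi, hj, sum_split hn, blk_12 hn]
      simp only [blk_1a, blk_a2 hn, blk_11, blk_12 hn, blk_22 hn, zero_mul, mul_zero,
        add_zero, Finset.sum_const_zero, zero_add]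
  · rcases hj3 with hj | hj | hj
    · have hje : j = emb n ⟨j, hj⟩ := by ext; rfl
      rw [hi, hje, sum_split hn, blk_2a hn]
      simp only [blk_aa, blk_2a hn, blk_21 hn, blk_1a, blk_22 hn, zero_mul, mul_zero,
        add_zero, Finset.sum_const_zero, zero_add]
    · rw [hi, hj, sum_split hn, blk_21 hn]
      simp only [blk_2a hn, blk_a1, blk_21 hn, blk_11, blk_22 hn, zero_mul, mul_zero,
        add_zero, Finset.sum_const_zero, zero_add]
    · rw [hi, hj, sum_split hn, blk_22 hn]
      simp only [blk_2a hn, blk_a2 hn, blk_21 hn, blk_12 hn, blk_22 hn, zero_mul, mul_zero,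
        add_zero, Finset.sum_const_zero, zero_add]

lemma blk_quadform (hn : 1 ≤ n) (T : Fin (n-1) → Fin (n-1) → ℂ)
    (c r : Fin (n-1) → ℂ) (d e : ℂ) (u : Fin (n+1) → ℂ) :
    dotProduct (star u) ((blk n T c r d e) *ᵥ u) =
      (∑ a, ∑ b, star (u (emb n a)) * (T a b * u (emb n b)))
      + (∑ a, star (u (emb n a)) * (c a * u (iN1 n)))
      + star (u (iN1 n)) * ((∑ b, r b * u (emb n b)) + d * u (iN1 n))
      + star (u (iN2 n)) * (e * u (iN2 n)) := by
  simp only [Matrix.mulVec, dotProduct, Pi.star_apply]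
  rw [sum_split hn (f := fun i => star (u i) * ∑ j, blk n T c r d e i j * u j)]
  have hA : ∑ a : Fin (n-1), star (u (emb n a)) * ∑ j, blk n T c r d e (emb n a) j * u j
      = (∑ a, ∑ b, star (u (emb n a)) * (T a b * u (emb n b)))
        + (∑ a, star (u (emb n a)) * (c a * u (iN1 n))) := by
    rw [← Finset.sum_add_distrib]
    apply Finset.sum_congr rfl
    intro a _
    rw [sum_split hn (f := fun j => blk n T c r d e (emb n a) j * u j)]
    simp only [blk_aa, blk_a1, blk_a2 hn, zero_mul, add_zero]
    rw [mul_add, Finset.mul_sum]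
  have hB : star (u (iN1 n)) * ∑ j, blk n T c r d e (iN1 n) j * u j
      = star (u (iN1 n)) * ((∑ b, r b * u (emb n b)) + d * u (iN1 n)) := by
    rw [sum_split hn (f := fun j => blk n T c r d e (iN1 n) j * u j)]
    simp only [blk_1a, blk_11, blk_12 hn, zero_mul, add_zero]
  have hC : star (u (iN2 n)) * ∑ j, blk n T c r d e (iN2 n) j * u j
      = star (u (iN2 n)) * (e * u (iN2 n)) := by
    rw [sum_split hn (f := fun j => blk n T c r d e (iN2 n) j * u j)]
    simp only [blk_2a hn, blk_21 hn, blk_22 hn, zero_mul, add_zero,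
      Finset.sum_const_zero, zero_add]
  rw [hA, hB, hC]


lemma fin_tri (hn : 1 ≤ n) (i : Fin (n+1)) :
    (∃ a : Fin (n-1), i = emb n a) ∨ i = iN1 n ∨ i = iN2 n := by
  have := i.2
  by_cases h : (i:ℕ) < n-1
  · exact Or.inl ⟨⟨i, h⟩, by ext; rfl⟩
  · rcases Nat.lt_or_ge (i:ℕ) n with h2 | h2
    · exact Or.inr (Or.inl (by ext; simp only [iN1]; omega))
    · exact Or.inr (Or.inr (by ext; simp only [iN2]; omega))

lemma blk_herm (hn : 1 ≤ n) (T : Fin (n-1) → Fin (n-1) → ℂ) (c r : Fin (n-1) → ℂ)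
    (d e : ℂ) (hT : ∀ a b, star (T b a) = T a b) (hc : ∀ a, star (r a) = c a)
    (hr : ∀ a, star (c a) = r a) (hd : star d = d) (he : star e = e) :
    (blk n T c r d e).IsHermitian := by
  apply Matrix.ext
  intro i j
  rw [Matrix.conjTranspose_apply]
  rcases fin_tri hn i with ⟨a, rfl⟩ | rfl | rfl <;>
    rcases fin_tri hn j with ⟨b, rfl⟩ | rfl | rfl <;>
    simp only [blk_aa, blk_a1, blk_a2 hn, blk_1a, blk_11, blk_12 hn, blk_2a hn,
      blk_21 hn, blk_22 hn, star_zero, hT, hc, hr, hd, he]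

end Aux3

open Aux Aux2 Aux3

/-- W·p₁ is positive semidefinite. -/
theorem stmt12 (n : ℕ) (hn : 2 ≤ n)
    (G : Matrix (Fin (n-1)) (Fin (n-1)) ℝ) (hG : G.PosDef)
    (ξ : Fin (n-1) → ℝ) (hξ : ξ ≠ 0)
    (ξs : Fin (n-1) → ℝ) (hξs : ξs = G.mulVec ξ)
    (s : ℝ) (hs : s = Real.sqrt (ξ ⬝ᵥ G.mulVec ξ))
    (lam mu : ℝ) (hmu : 0 < mu) (hlm : 0 ≤ lam + mu)
    (c : ℝ) (hc : c = (lam + mu)/(lam + 3*mu)) (al : ℝ) (hal : 0 < al) :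
    (Wmat n G * p1mat n ξ ξs s lam mu al).PosSemidef := by
  classical
  have hn1 : 1 ≤ n := by omega
  have h3mu : 0 < lam + 3*mu := by linarith
  have hsq : 0 < ξ ⬝ᵥ G.mulVec ξ := by simpa using hG.dotProduct_mulVec_pos hξ
  have hs0 : 0 < s := hs ▸ Real.sqrt_pos.mpr hsq
  have hs2 : s^2 = ξ ⬝ᵥ G.mulVec ξ := hs ▸ Real.sq_sqrt hsq.le
  have hGdet : IsUnit G.det := isUnit_iff_ne_zero.mpr hG.det_pos.ne'
  have hGinv : G⁻¹ *ᵥ ξs = ξ := by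
    rw [hξs, Matrix.mulVec_mulVec, Matrix.nonsing_inv_mul G hGdet, Matrix.one_mulVec]
  have hGinva : ∀ a, ∑ k, G⁻¹ a k * ξs k = ξ a := fun a => congrFun hGinv a
  open scoped MatrixOrder in
  obtain ⟨B, hB⟩ := CStarAlgebra.nonneg_iff_eq_star_mul_self.mp hG.inv.posSemidef.nonneg
  have hHB : ∀ a b, G⁻¹ a b = ∑ k, B k a * B k b := by
    intro a b
    rw [hB, Matrix.mul_apply]
    simp [Matrix.conjTranspose_apply, Matrix.star_eq_conjTranspose]
  -- abbreviations for the real constants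
  set k' : ℝ := 2 * mu^2/(lam + 3*mu) with hk'
  set c₂ : ℝ := mu * (lam + mu)/((lam + 3*mu) * s) with hc₂
  set d' : ℝ := 2 * mu * (lam + 2*mu)/(lam + 3*mu) * s with hd'
  set K : ℝ := 2 * mu * (lam + mu)/(lam + 3*mu) with hK
  -- the product
  have hprod : Wmat n G * p1mat n ξ ξs s lam mu al =
      blk n (fun a b => ((mu * s * (G⁻¹ a b) + c₂ * (ξ a * ξ b) : ℝ) : ℂ))
        (fun a => -(Complex.I * ((k' * ξ a : ℝ) : ℂ)))
        (fun b => Complex.I * ((k' * ξ b : ℝ) : ℂ))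
        ((d' : ℝ) : ℂ) ((al * s : ℝ) : ℂ) := by
    unfold Wmat p1mat
    rw [blk_mul hn1]
    have hT : (fun a b => ∑ kk, ((G⁻¹ a kk : ℝ) : ℂ) *
          ((mu * s * (if kk = b then 1 else 0) + c₂ * ξs kk * ξ b : ℝ) : ℂ))
        = fun a b => ((mu * s * (G⁻¹ a b) + c₂ * (ξ a * ξ b) : ℝ) : ℂ) := by
      funext a b
      have : ∀ kk : Fin (n-1), ((G⁻¹ a kk : ℝ) : ℂ) *
            ((mu * s * (if kk = b then 1 else 0) + c₂ * ξs kk * ξ b : ℝ) : ℂ)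
          = ((G⁻¹ a kk * (mu * s * (if kk = b then 1 else 0) + c₂ * ξs kk * ξ b) : ℝ) : ℂ) := by
        intro kk; push_cast; ring
      rw [Finset.sum_congr rfl (fun kk _ => this kk), ← Complex.ofReal_sum]
      congr 1
      have hsplit : ∀ kk : Fin (n-1), G⁻¹ a kk * (mu * s * (if kk = b then 1 else 0)
            + c₂ * ξs kk * ξ b)
          = (if kk = b then G⁻¹ a kk * (mu * s) else 0) + (c₂ * ξ b) * (G⁻¹ a kk * ξs kk) := by
        intro kk; by_cases h : kk = b <;> simp [h] <;> ring
      rw [Finset.sum_congr rfl (fun kk _ => hsplit kk), Finset.sum_add_distrib,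
        Finset.sum_ite_eq' Finset.univ b (fun kk => G⁻¹ a kk * (mu * s)),
        ← Finset.mul_sum, hGinva a]
      simp only [Finset.mem_univ, if_true]
      ring
    have hcv : (fun a => ∑ kk, ((G⁻¹ a kk : ℝ) : ℂ) *
          (-(Complex.I * ((k' * ξs kk : ℝ) : ℂ))))
        = fun a => -(Complex.I * ((k' * ξ a : ℝ) : ℂ)) := by
      funext a
      have : ∀ kk : Fin (n-1), ((G⁻¹ a kk : ℝ) : ℂ) * (-(Complex.I * ((k' * ξs kk : ℝ) : ℂ)))
          = -(Complex.I * ((k' : ℝ) : ℂ)) * ((G⁻¹ a kk * ξs kk : ℝ) : ℂ) := by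
        intro kk; push_cast; ring
      rw [Finset.sum_congr rfl (fun kk _ => this kk), ← Finset.mul_sum,
        ← Complex.ofReal_sum, hGinva a]
      push_cast; ring
    rw [hT, hcv]
    simp only [one_mul]
    rfl
  have hGsym : ∀ a b, G⁻¹ a b = G⁻¹ b a := by
    intro a b
    rw [hHB, hHB]
    exact Finset.sum_congr rfl fun kk _ => mul_comm _ _
  rw [hprod, Matrix.posSemidef_iff_dotProduct_mulVec]
  constructor
  · apply blk_herm hn1
    · intro a b
      simp only [Complex.star_def, Complex.conj_ofReal]
      rw [hGsym a b]
      push_cast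
      ring
    · intro a
      simp only [star_mul', Complex.star_def, Complex.conj_ofReal, Complex.conj_I]
      ring
    · intro a
      simp only [star_neg, star_mul', Complex.star_def, Complex.conj_ofReal, Complex.conj_I]
      ring
    · simp only [Complex.star_def, Complex.conj_ofReal]
    · simp only [Complex.star_def, Complex.conj_ofReal]
  · intro u
    rw [blk_quadform hn1]
    set y := u (iN1 n) with hy
    set z := u (iN2 n) with hz
    set t : ℂ := ∑ b, (ξ b : ℂ) * u (emb n b) with ht
    set w : Fin (n-1) → ℂ := fun cc => ∑ a, (B cc a : ℂ) * u (emb n a) with hw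
    set p : Fin (n-1) → ℝ := fun cc => ∑ j, B cc j * ξs j with hp
    have hsC : ((s:ℝ):ℂ) ≠ 0 := Complex.ofReal_ne_zero.mpr hs0.ne'
    have h3C : ((lam + 3*mu:ℝ):ℂ) ≠ 0 := Complex.ofReal_ne_zero.mpr h3mu.ne'
    have hmuC : ((mu:ℝ):ℂ) ≠ 0 := Complex.ofReal_ne_zero.mpr hmu.ne'
    have hstt : star t = ∑ b, (ξ b : ℂ) * star (u (emb n b)) := by
      rw [ht, star_sum]
      exact Finset.sum_congr rfl fun b _ => by
        rw [star_mul']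
        simp [Complex.star_def, Complex.conj_ofReal]
    have hstw : ∀ cc, star (w cc) = ∑ a, (B cc a : ℂ) * star (u (emb n a)) := by
      intro cc
      rw [hw, star_sum]
      exact Finset.sum_congr rfl fun a _ => by
        rw [star_mul']
        simp [Complex.star_def, Complex.conj_ofReal]
    have hW : ∑ cc, star (w cc) * w cc
        = ∑ a, ∑ b, ((G⁻¹ a b : ℝ):ℂ) * (star (u (emb n a)) * u (emb n b)) := by
      calc ∑ cc, star (w cc) * w cc
          = ∑ cc, ∑ a, ∑ b, ((B cc a:ℂ) * star (u (emb n a))) * ((B cc b:ℂ) * u (emb n b)) := by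
            refine Finset.sum_congr rfl fun cc _ => ?_
            rw [hstw cc, hw, Finset.sum_mul_sum]
        _ = ∑ a, ∑ b, ∑ cc, ((B cc a:ℂ) * star (u (emb n a))) * ((B cc b:ℂ) * u (emb n b)) := by
            rw [Finset.sum_comm]
            exact Finset.sum_congr rfl fun a _ => Finset.sum_comm
        _ = ∑ a, ∑ b, ((G⁻¹ a b : ℝ):ℂ) * (star (u (emb n a)) * u (emb n b)) := by
            refine Finset.sum_congr rfl fun a _ => Finset.sum_congr rfl fun b _ => ?_
            rw [hHB a b]
            push_cast
            rw [Finset.sum_mul]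
            exact Finset.sum_congr rfl fun cc _ => by ring
    have htt : star t * t = ∑ a, ∑ b, ((ξ a * ξ b : ℝ):ℂ) * (star (u (emb n a)) * u (emb n b)) := by
      rw [hstt, ht, Finset.sum_mul_sum]
      refine Finset.sum_congr rfl fun a _ => Finset.sum_congr rfl fun b _ => ?_
      push_cast
      ring
    have hQ1 : (∑ a, ∑ b, star (u (emb n a)) *
          (((mu * s * (G⁻¹ a b) + c₂ * (ξ a * ξ b) : ℝ):ℂ) * u (emb n b)))
        = ((mu*s : ℝ):ℂ) * (∑ cc, star (w cc) * w cc) + ((c₂:ℝ):ℂ) * (star t * t) := by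
      calc (∑ a, ∑ b, star (u (emb n a)) *
            (((mu * s * (G⁻¹ a b) + c₂ * (ξ a * ξ b) : ℝ):ℂ) * u (emb n b)))
          = ∑ a, ∑ b, (((mu*s:ℝ):ℂ) * (((G⁻¹ a b : ℝ):ℂ) * (star (u (emb n a)) * u (emb n b)))
              + ((c₂:ℝ):ℂ) * (((ξ a * ξ b : ℝ):ℂ) * (star (u (emb n a)) * u (emb n b)))) := by
            refine Finset.sum_congr rfl fun a _ => Finset.sum_congr rfl fun b _ => ?_
            push_cast
            ring
        _ = ((mu*s : ℝ):ℂ) * (∑ a, ∑ b, ((G⁻¹ a b : ℝ):ℂ) * (star (u (emb n a)) * u (emb n b)))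
              + ((c₂:ℝ):ℂ) * (∑ a, ∑ b, ((ξ a * ξ b : ℝ):ℂ) * (star (u (emb n a)) * u (emb n b))) := by
            simp only [Finset.sum_add_distrib, Finset.mul_sum]
        _ = ((mu*s : ℝ):ℂ) * (∑ cc, star (w cc) * w cc) + ((c₂:ℝ):ℂ) * (star t * t) := by
            rw [hW, htt]
    have hQ2 : (∑ a, star (u (emb n a)) * (-(Complex.I * ((k' * ξ a : ℝ):ℂ)) * y))
        = -(Complex.I * ((k':ℝ):ℂ) * (star t * y)) := by
      calc (∑ a, star (u (emb n a)) * (-(Complex.I * ((k' * ξ a : ℝ):ℂ)) * y))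
          = ∑ a, (-(Complex.I * ((k':ℝ):ℂ) * y)) * ((ξ a : ℂ) * star (u (emb n a))) := by
            refine Finset.sum_congr rfl fun a _ => ?_
            push_cast
            ring
        _ = (-(Complex.I * ((k':ℝ):ℂ) * y)) * star t := by rw [← Finset.mul_sum, ← hstt]
        _ = -(Complex.I * ((k':ℝ):ℂ) * (star t * y)) := by ring
    have hQ3 : (∑ b, Complex.I * ((k' * ξ b : ℝ):ℂ) * u (emb n b))
        = Complex.I * ((k':ℝ):ℂ) * t := by
      calc (∑ b, Complex.I * ((k' * ξ b : ℝ):ℂ) * u (emb n b))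
          = ∑ b, (Complex.I * ((k':ℝ):ℂ)) * ((ξ b : ℂ) * u (emb n b)) := by
            refine Finset.sum_congr rfl fun b _ => ?_
            push_cast
            ring
        _ = (Complex.I * ((k':ℝ):ℂ)) * t := by rw [← Finset.mul_sum, ← ht]
    have hpt : ∀ a, ∑ cc, B cc a * p cc = ξ a := by
      intro a
      calc ∑ cc, B cc a * p cc = ∑ cc, ∑ j, B cc a * (B cc j * ξs j) := by
            refine Finset.sum_congr rfl fun cc _ => ?_
            rw [hp]
            exact Finset.mul_sum _ _ _
        _ = ∑ j, ∑ cc, B cc a * (B cc j * ξs j) := Finset.sum_comm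
        _ = ∑ j, G⁻¹ a j * ξs j := by
            refine Finset.sum_congr rfl fun j _ => ?_
            rw [hHB a j, Finset.sum_mul]
            exact Finset.sum_congr rfl fun cc _ => by ring
        _ = ξ a := hGinva a
    have hpp : ∑ cc, p cc * p cc = s^2 := by
      calc ∑ cc, p cc * p cc = ∑ cc, ∑ j, ξs j * (B cc j * p cc) := by
            refine Finset.sum_congr rfl fun cc _ => ?_
            nth_rewrite 1 [hp]
            rw [Finset.sum_mul]
            exact Finset.sum_congr rfl fun j _ => by ring
        _ = ∑ j, ∑ cc, ξs j * (B cc j * p cc) := Finset.sum_comm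
        _ = ∑ j, ξs j * ξ j := by
            refine Finset.sum_congr rfl fun j _ => ?_
            rw [← Finset.mul_sum, hpt j]
        _ = s^2 := by
            rw [hs2, hξs]
            unfold dotProduct
            exact Finset.sum_congr rfl fun j _ => by rw [← hξs]; ring
    have hwp : ∑ cc, ((p cc : ℝ):ℂ) * w cc = t := by
      calc ∑ cc, ((p cc : ℝ):ℂ) * w cc
          = ∑ cc, ∑ a, ((B cc a : ℂ) * ((p cc:ℝ):ℂ)) * u (emb n a) := by
            refine Finset.sum_congr rfl fun cc _ => ?_
            rw [hw, Finset.mul_sum]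
            exact Finset.sum_congr rfl fun a _ => by ring
        _ = ∑ a, (∑ cc, (B cc a : ℂ) * ((p cc:ℝ):ℂ)) * u (emb n a) := by
            rw [Finset.sum_comm]
            exact Finset.sum_congr rfl fun a _ => (Finset.sum_mul _ _ _).symm
        _ = ∑ a, (ξ a : ℂ) * u (emb n a) := by
            refine Finset.sum_congr rfl fun a _ => ?_
            congr 1
            rw [show (∑ cc, (B cc a : ℂ) * ((p cc:ℝ):ℂ)) = ((∑ cc, B cc a * p cc : ℝ):ℂ) by
              push_cast; rfl]
            rw [hpt a]
        _ = t := ht.symm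
    have hpw : ∑ cc, ((p cc : ℝ):ℂ) * star (w cc) = star t := by
      calc ∑ cc, ((p cc : ℝ):ℂ) * star (w cc)
          = ∑ cc, ∑ a, ((B cc a : ℂ) * ((p cc:ℝ):ℂ)) * star (u (emb n a)) := by
            refine Finset.sum_congr rfl fun cc _ => ?_
            rw [hstw cc, Finset.mul_sum]
            exact Finset.sum_congr rfl fun a _ => by ring
        _ = ∑ a, (∑ cc, (B cc a : ℂ) * ((p cc:ℝ):ℂ)) * star (u (emb n a)) := by
            rw [Finset.sum_comm]
            exact Finset.sum_congr rfl fun a _ => (Finset.sum_mul _ _ _).symm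
        _ = ∑ a, (ξ a : ℂ) * star (u (emb n a)) := by
            refine Finset.sum_congr rfl fun a _ => ?_
            congr 1
            rw [show (∑ cc, (B cc a : ℂ) * ((p cc:ℝ):ℂ)) = ((∑ cc, B cc a * p cc : ℝ):ℂ) by
              push_cast; rfl]
            rw [hpt a]
        _ = star t := hstt.symm
    have hppC : ∑ cc, ((p cc : ℝ):ℂ) * ((p cc : ℝ):ℂ) = ((s^2 : ℝ):ℂ) := by
      rw [show (∑ cc, ((p cc : ℝ):ℂ) * ((p cc : ℝ):ℂ)) = ((∑ cc, p cc * p cc : ℝ):ℂ) by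
        push_cast; rfl]
      rw [hpp]
    set q : Fin (n-1) → ℂ := fun cc => ((s:ℝ):ℂ) * w cc - (t / ((s:ℝ):ℂ)) * ((p cc:ℝ):ℂ)
      with hq
    have hSq : ∑ cc, star (q cc) * q cc
        = ((s^2:ℝ):ℂ) * (∑ cc, star (w cc) * w cc) - star t * t := by
      have hqe : ∀ cc, star (q cc) * q cc = ((s^2:ℝ):ℂ) * (star (w cc) * w cc)
          - t * (((p cc:ℝ):ℂ) * star (w cc)) - star t * (((p cc:ℝ):ℂ) * w cc)
          + ((star t * t) / ((s^2:ℝ):ℂ)) * (((p cc:ℝ):ℂ) * ((p cc:ℝ):ℂ)) := by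
        intro cc
        have hst : star (q cc) = ((s:ℝ):ℂ) * star (w cc) - (star t / ((s:ℝ):ℂ)) * ((p cc:ℝ):ℂ) := by
          rw [hq]
          simp only [star_sub, star_mul', star_div₀, Complex.star_def, Complex.conj_ofReal]
        rw [hst, hq]
        push_cast
        field_simp
        ring
      rw [Finset.sum_congr rfl fun cc _ => hqe cc]
      simp only [Finset.sum_add_distrib, Finset.sum_sub_distrib, ← Finset.mul_sum]
      rw [hwp, hpw, hppC]
      push_cast
      field_simp
      ring
    set r : ℂ := t - Complex.I * ((s:ℝ):ℂ) * y with hr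
    have hrr : star r * r = star t * t + ((s^2:ℝ):ℂ) * (star y * y)
        + Complex.I * ((s:ℝ):ℂ) * (star y * t) - Complex.I * ((s:ℝ):ℂ) * (star t * y) := by
      have hst : star r = star t + Complex.I * ((s:ℝ):ℂ) * star y := by
        rw [hr]
        simp only [star_sub, star_mul', Complex.star_def, Complex.conj_ofReal, Complex.conj_I]
        ring
      rw [hst, hr]
      push_cast
      linear_combination (-((s:ℝ):ℂ)^2 * star y * y) * Complex.I_mul_I
    have hK0 : 0 ≤ K := by
      rw [hK]
      apply div_nonneg _ h3mu.le
      nlinarith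
    have hfin : (∑ a, ∑ b, star (u (emb n a)) *
          (((mu * s * (G⁻¹ a b) + c₂ * (ξ a * ξ b) : ℝ):ℂ) * u (emb n b)))
        + (∑ a, star (u (emb n a)) * (-(Complex.I * ((k' * ξ a : ℝ):ℂ)) * y))
        + star y * ((∑ b, Complex.I * ((k' * ξ b : ℝ):ℂ) * u (emb n b)) + ((d':ℝ):ℂ) * y)
        + star z * (((al * s:ℝ):ℂ) * z)
        = ((mu/s : ℝ):ℂ) * (∑ cc, star (q cc) * q cc)
          + ((k'/s : ℝ):ℂ) * (star r * r)
          + ((K/s : ℝ):ℂ) * (star t * t)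
          + ((K*s : ℝ):ℂ) * (star y * y)
          + ((al*s : ℝ):ℂ) * (star z * z) := by
      have g1 : ((c₂:ℝ):ℂ) = -((mu/s : ℝ):ℂ) + ((k'/s:ℝ):ℂ) + ((K/s:ℝ):ℂ) := by
        exact_mod_cast congrArg (fun x : ℝ => (x:ℂ))
          (show c₂ = -(mu/s) + k'/s + K/s by
            rw [hc₂, hk', hK]; field_simp [show lam + mu * 3 ≠ 0 by linarith]; ring)
      have g2 : ((mu/s : ℝ):ℂ) * ((s^2:ℝ):ℂ) = ((mu*s:ℝ):ℂ) := by
        exact_mod_cast congrArg (fun x : ℝ => (x:ℂ))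
          (show (mu/s)*s^2 = mu*s by field_simp)
      have g3 : ((k'/s:ℝ):ℂ) * ((s:ℝ):ℂ) = ((k':ℝ):ℂ) := by
        exact_mod_cast congrArg (fun x : ℝ => (x:ℂ))
          (show (k'/s)*s = k' by field_simp)
      have g4 : ((k'/s:ℝ):ℂ) * ((s^2:ℝ):ℂ) + ((K*s:ℝ):ℂ) = ((d':ℝ):ℂ) := by
        exact_mod_cast congrArg (fun x : ℝ => (x:ℂ))
          (show (k'/s)*s^2 + K*s = d' by
            rw [hk', hK, hd']; field_simp; ring)
      rw [hQ1, hQ2, hQ3, hSq, hrr]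
      linear_combination (star t * t) * g1 - (∑ cc, star (w cc) * w cc) * g2
        + Complex.I * (star t * y - star y * t) * g3 - (star y * y) * g4
    rw [hfin]
    have hnn : ∀ (cr : ℝ) (a : ℂ), 0 ≤ cr → 0 ≤ ((cr:ℝ):ℂ) * (star a * a) := by
      intro cr a hcr
      exact mul_nonneg (Complex.zero_le_real.mpr hcr) (star_mul_self_nonneg a)
    have h1 : 0 ≤ ((mu/s : ℝ):ℂ) * (∑ cc, star (q cc) * q cc) := by
      apply mul_nonneg (Complex.zero_le_real.mpr (by positivity))
      exact Finset.sum_nonneg fun cc _ => star_mul_self_nonneg _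
    refine add_nonneg (add_nonneg (add_nonneg (add_nonneg h1 ?_) ?_) ?_) ?_
    · exact hnn _ _ (by positivity)
    · exact hnn _ _ (div_nonneg hK0 hs0.le)
    · exact hnn _ _ (mul_nonneg hK0 hs0.le)
    · exact hnn _ _ (by positivity)
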